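/- Let X be a Banach space and let (A_m)_{m≥0} be a sequence of bounded linear operators on X. Suppose the linear system x_{n+1} = A_n x_n, n ≥ 0, has the ℓ^∞-shadowing property: for every ε > 0 there exists δ > 0 such that every sequence (y_n)_{n≥0} ⊂ X with sup_{n≥0} ‖y_{n+1} − A_n y_n‖ ≤ δ admits a sequence (x_n)_{n≥0} with x_{n+1} = A_n x_n for all n ≥ 0 and sup_{n≥0} ‖x_n − y_n‖ ≤ ε. Then for every bounded sequence (z_n)_{n≥0} ⊂ X with z_0 = 0 there exists a bounded sequence (w_n)_{n≥0} ⊂ X such that w_{n+1} − A_n w_n = z_{n+1} for all n ≥ 0. -/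

import Mathlib

/-- If the linear system `x_{n+1} = A_n x_n`, `n ≥ 0`, has the `ℓ^∞`-shadowing property, then
for every bounded sequence `(z_n)_{n≥0}` with `z_0 = 0` there is a bounded sequence
`(w_n)_{n≥0}` with `w_{n+1} - A_n w_n = z_{n+1}` for all `n ≥ 0`. -/
theorem one_sided_shadowing_implies_admissibility
    {X : Type*} [NormedAddCommGroup X] [NormedSpace ℝ X] [CompleteSpace X]
    (A : ℕ → X →L[ℝ] X)
    (hshad : ∀ ε : ℝ, 0 < ε → ∃ δ : ℝ, 0 < δ ∧ ∀ y : ℕ → X,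
      (∀ n : ℕ, ‖y (n + 1) - A n (y n)‖ ≤ δ) →
      ∃ x : ℕ → X, (∀ n : ℕ, x (n + 1) = A n (x n)) ∧ ∀ n : ℕ, ‖x n - y n‖ ≤ ε) :
    ∀ z : ℕ → X, BddAbove (Set.range fun n => ‖z n‖) → z 0 = 0 →
      ∃ w : ℕ → X, BddAbove (Set.range fun n => ‖w n‖) ∧
        ∀ n : ℕ, w (n + 1) - A n (w n) = z (n + 1) := by
  intro z hz _hz0
  obtain ⟨δ, hδ, hsh⟩ := hshad 1 one_pos
  obtain ⟨M, hM⟩ := hz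
  have hM0 : 0 ≤ M := le_trans (norm_nonneg _) (hM ⟨0, rfl⟩)
  have hMz : ∀ n, ‖z n‖ ≤ M := fun n => hM ⟨n, rfl⟩
  set c : ℝ := δ / (M + 1) with hc
  have hcpos : 0 < c := div_pos hδ (by linarith)
  set u : ℕ → X := fun n => Nat.rec 0 (fun n un => A n un + z (n + 1)) n with hu
  have hurec : ∀ n, u (n + 1) = A n (u n) + z (n + 1) := fun n => rfl
  set y : ℕ → X := fun n => c • u n with hy
  have hkey : ∀ n, y (n + 1) - A n (y n) = c • z (n + 1) := by
    intro n
    simp only [hy, hurec, smul_add, map_smul, add_sub_cancel_left]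
  have hy' : ∀ n, ‖y (n + 1) - A n (y n)‖ ≤ δ := by
    intro n
    rw [hkey n, norm_smul, Real.norm_eq_abs, abs_of_pos hcpos]
    have hzn := hMz (n + 1)
    have h1 : c * ‖z (n + 1)‖ ≤ c * (M + 1) := by nlinarith
    have h2 : c * (M + 1) = δ := by rw [hc]; field_simp [(by linarith : (0:ℝ) < M + 1).ne']
    linarith
  obtain ⟨x, hx, hxy⟩ := hsh y hy'
  refine ⟨fun n => c⁻¹ • (y n - x n), ⟨c⁻¹, ?_⟩, ?_⟩
  · rintro r ⟨n, rfl⟩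
    simp only [norm_smul, Real.norm_eq_abs, abs_of_pos (inv_pos.mpr hcpos)]
    have h1 : ‖y n - x n‖ ≤ 1 := by rw [norm_sub_rev]; exact hxy n
    have h2 : (0:ℝ) < c⁻¹ := inv_pos.mpr hcpos
    nlinarith
  · intro n
    have : (c⁻¹ • (y (n + 1) - x (n + 1))) - A n (c⁻¹ • (y n - x n))
        = c⁻¹ • (y (n + 1) - A n (y n)) := by
      simp only [map_smul, map_sub, hx n]
      rw [← smul_sub]
      congr 1
      abel
    rw [this, hkey n, smul_smul, inv_mul_cancel₀ (ne_of_gt hcpos), one_smul]
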